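/- Let n < 2j be non-negative integers, and let β_{j-k} := 2^{-j-k} Σ_{i=0}^{k} (-2)^i C(n,i) C(k+j-1-i, j-1) for 0 ≤ k ≤ j-1. Then β_j = 2^{-j} and these coefficients satisfy the recurrence β_{j-k} = (-1)^k 2^{-j} C(n,k) - Σ_{i=0}^{k-1} (-2)^{i-k} C(j, k-i) β_{j-i} for k = 1, ..., j-1. -/

import Mathlib

open Finset

section KeyLemmas
open PowerSeries

lemma coeff_one_sub_X_pow (M n : ℕ) :
    PowerSeries.coeff (R := ℝ) n ((1 - PowerSeries.X) ^ M) = (-1 : ℝ) ^ n * M.choose n := by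
  rw [sub_eq_add_neg, add_comm, add_pow, map_sum]
  have hterm : ∀ k, PowerSeries.coeff (R := ℝ) n
      ((-PowerSeries.X : ℝ⟦X⟧) ^ k * 1 ^ (M - k) * (M.choose k : ℝ⟦X⟧)) =
      if n = k then (-1 : ℝ) ^ n * M.choose n else 0 := by
    intro k
    have he : ((-PowerSeries.X : ℝ⟦X⟧) ^ k * 1 ^ (M - k) * (M.choose k : ℝ⟦X⟧))
        = PowerSeries.C (R := ℝ) ((-1 : ℝ) ^ k * M.choose k) * PowerSeries.X ^ k := by
      simp only [map_mul, map_pow, map_neg, map_one, map_natCast]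
      ring
    rw [he, coeff_C_mul_X_pow]
    split_ifs with h
    · subst h; rfl
    · rfl
  simp only [hterm]
  rw [Finset.sum_ite_eq (Finset.range (M + 1)) n fun _ => (-1 : ℝ) ^ n * M.choose n]
  split_ifs with h
  · rfl
  · have : M.choose n = 0 := Nat.choose_eq_zero_of_lt (by simpa using h)
    simp [this]

lemma key (d K : ℕ) (hK : 1 ≤ K) :
    ∑ m ∈ Finset.range (K + 1), (-1 : ℝ) ^ m * ((d + m).choose d) * ((d + 1).choose (K - m)) = 0 := by
  have h := congrArg (PowerSeries.coeff (R := ℝ) K)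
    (PowerSeries.mk_add_choose_mul_one_sub_pow_eq_one ℝ d)
  rw [coeff_mul, coeff_one, if_neg (by omega)] at h
  rw [Finset.Nat.sum_antidiagonal_eq_sum_range_succ
    (fun a b => PowerSeries.coeff (R := ℝ) a (PowerSeries.mk fun n => (Nat.choose (d + n) d : ℝ))
      * PowerSeries.coeff (R := ℝ) b ((1 - PowerSeries.X) ^ (d + 1)))] at h
  simp only [coeff_mk, coeff_one_sub_X_pow] at h
  have h2 : ∑ m ∈ Finset.range (K + 1),
      (-1:ℝ)^K * ((-1) ^ m * ((d + m).choose d) * ((d + 1).choose (K - m))) = 0 := by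
    rw [← h]
    apply Finset.sum_congr rfl
    intro m hm
    have hmK : m ≤ K := Nat.lt_succ_iff.mp (Finset.mem_range.mp hm)
    have hs : (-1:ℝ) ^ (K - m) = (-1) ^ K * (-1) ^ m := by
      rw [← pow_add]
      conv_rhs => rw [show K + m = (K - m) + 2 * m by omega]
      rw [pow_add, pow_mul]
      norm_num
    rw [hs]; ring
  rw [← Finset.mul_sum] at h2
  rcases mul_eq_zero.mp h2 with h3 | h3
  · exact absurd h3 (pow_ne_zero K (by norm_num))
  · exact h3

end KeyLemmas

noncomputable def betaCoef (n j i : ℕ) : ℝ :=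
  (2 : ℝ) ^ (-(j : ℤ) - ((j - i : ℕ) : ℤ)) *
    ∑ l ∈ Finset.range ((j - i) + 1),
      (-2 : ℝ) ^ l * (n.choose l) * (((j - i) + j - 1 - l).choose (j - 1))


lemma beta_apply (n j i : ℕ) (h : i ≤ j) :
    betaCoef n j (j - i) = (2 : ℝ) ^ (-(j : ℤ) - (i : ℤ)) *
      ∑ l ∈ Finset.range (i + 1),
        (-2 : ℝ) ^ l * (n.choose l) * ((i + j - 1 - l).choose (j - 1)) := by
  unfold betaCoef
  rw [Nat.sub_sub_self h]

lemma aux_pow (j k i : ℕ) :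
    (-2 : ℝ) ^ ((i : ℤ) - (k : ℤ)) * (2 : ℝ) ^ (-(j : ℤ) - (i : ℤ)) =
      (-1 : ℝ) ^ k * (2 : ℝ) ^ (-(j : ℤ) - (k : ℤ)) * (-1 : ℝ) ^ i := by
  have hm : (-2 : ℝ) ≠ 0 := by norm_num
  have h2 : (2 : ℝ) ≠ 0 := two_ne_zero
  rw [zpow_sub₀ hm, zpow_natCast, zpow_natCast,
    show -(j : ℤ) - (i : ℤ) = -((j + i : ℕ) : ℤ) by push_cast; ring,
    show -(j : ℤ) - (k : ℤ) = -((j + k : ℕ) : ℤ) by push_cast; ring,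
    zpow_neg, zpow_neg, zpow_natCast, zpow_natCast,
    neg_pow 2 i, neg_pow 2 k, pow_add, pow_add]
  rw [div_eq_mul_inv, mul_inv, ← inv_pow, show (-1 : ℝ)⁻¹ = -1 by norm_num]
  field_simp

lemma master (n j k : ℕ) (hk1 : 1 ≤ k) (hkj : k < j) :
    ∑ i ∈ Finset.range (k + 1),
      (-2 : ℝ) ^ ((i : ℤ) - (k : ℤ)) * (j.choose (k - i)) * betaCoef n j (j - i)
      = (-1 : ℝ) ^ k * (2 : ℝ) ^ (-(j : ℤ)) * (n.choose k) := by
  obtain ⟨d, rfl⟩ : ∃ d, j = d + 1 := ⟨j - 1, by omega⟩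
  -- Step 1: rewrite each term
  have step1 : ∀ i ∈ Finset.range (k + 1),
      (-2 : ℝ) ^ ((i : ℤ) - (k : ℤ)) * ((d+1).choose (k - i)) * betaCoef n (d+1) (d+1 - i)
      = (-1 : ℝ) ^ k * (2 : ℝ) ^ (-((d+1 : ℕ) : ℤ) - (k : ℤ)) *
        ((-1 : ℝ) ^ i * ((d+1).choose (k - i)) *
          ∑ l ∈ Finset.range (i + 1),
            (-2 : ℝ) ^ l * (n.choose l) * ((i + (d+1) - 1 - l).choose ((d+1) - 1))) := by
    intro i hi
    have hik : i ≤ k := Nat.lt_succ_iff.mp (Finset.mem_range.mp hi)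
    rw [beta_apply n (d+1) i (by omega)]
    linear_combination (((d+1).choose (k - i) : ℝ) *
      ∑ l ∈ Finset.range (i + 1),
        (-2 : ℝ) ^ l * (n.choose l) * ((i + (d+1) - 1 - l).choose ((d+1) - 1))) *
      aux_pow (d+1) k i
  rw [Finset.sum_congr rfl step1, ← Finset.mul_sum]
  -- Step 2: double sum
  have step2 : ∑ i ∈ Finset.range (k + 1),
      ((-1 : ℝ) ^ i * ((d+1).choose (k - i)) *
        ∑ l ∈ Finset.range (i + 1),
          (-2 : ℝ) ^ l * (n.choose l) * ((i + (d+1) - 1 - l).choose ((d+1) - 1)))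
      = (2 : ℝ) ^ k * (n.choose k) := by
    have hswap : ∑ i ∈ Finset.range (k + 1), ∑ l ∈ Finset.range (i + 1),
        ((-1 : ℝ) ^ i * ((d+1).choose (k - i)) *
          ((-2 : ℝ) ^ l * (n.choose l) * ((i + (d+1) - 1 - l).choose ((d+1) - 1))))
        = ∑ l ∈ Finset.range (k + 1), ∑ i ∈ Finset.Ico l (k + 1),
        ((-1 : ℝ) ^ i * ((d+1).choose (k - i)) *
          ((-2 : ℝ) ^ l * (n.choose l) * ((i + (d+1) - 1 - l).choose ((d+1) - 1)))) := by
      apply Finset.sum_comm'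
      intro i l
      simp only [Finset.mem_range, Finset.mem_Ico]
      omega
    calc ∑ i ∈ Finset.range (k + 1),
        ((-1 : ℝ) ^ i * ((d+1).choose (k - i)) *
          ∑ l ∈ Finset.range (i + 1),
            (-2 : ℝ) ^ l * (n.choose l) * ((i + (d+1) - 1 - l).choose ((d+1) - 1)))
        = ∑ i ∈ Finset.range (k + 1), ∑ l ∈ Finset.range (i + 1),
          ((-1 : ℝ) ^ i * ((d+1).choose (k - i)) *
            ((-2 : ℝ) ^ l * (n.choose l) * ((i + (d+1) - 1 - l).choose ((d+1) - 1)))) := by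
          apply Finset.sum_congr rfl
          intro i _
          rw [Finset.mul_sum]
      _ = ∑ l ∈ Finset.range (k + 1), ∑ i ∈ Finset.Ico l (k + 1),
          ((-1 : ℝ) ^ i * ((d+1).choose (k - i)) *
            ((-2 : ℝ) ^ l * (n.choose l) * ((i + (d+1) - 1 - l).choose ((d+1) - 1)))) := hswap
      _ = (2 : ℝ) ^ k * (n.choose k) := by
          rw [Finset.sum_eq_single_of_mem k (Finset.self_mem_range_succ k)]
          · rw [Finset.sum_Ico_eq_sum_range, show k + 1 - k = 1 by omega,
              Finset.sum_range_one, Nat.add_zero]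
            rw [show k + (d+1) - 1 - k = d by omega, show (d+1) - 1 = d by omega,
              Nat.choose_self, Nat.sub_self, Nat.choose_zero_right, neg_pow 2 k]
            push_cast
            ring_nf
            rw [mul_comm k 2, pow_mul]
            norm_num
          · intro l hl hlk
            have hlk' : l < k := by
              rcases Finset.mem_range.mp hl with h
              omega
            rw [Finset.sum_Ico_eq_sum_range]
            have hre : ∀ r ∈ Finset.range (k + 1 - l),
                ((-1 : ℝ) ^ (l + r) * ((d+1).choose (k - (l + r))) *
                  ((-2 : ℝ) ^ l * (n.choose l) * (((l + r) + (d+1) - 1 - l).choose ((d+1) - 1))))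
                = ((-1 : ℝ) ^ l * ((-2 : ℝ) ^ l * (n.choose l))) *
                  ((-1 : ℝ) ^ r * ((d + r).choose d) * ((d+1).choose ((k - l) - r))) := by
              intro r _
              rw [show (l + r) + (d+1) - 1 - l = d + r by omega,
                show (d+1) - 1 = d by omega,
                show k - (l + r) = (k - l) - r by omega,
                pow_add]
              ring
            rw [Finset.sum_congr rfl hre, ← Finset.mul_sum,
              show k + 1 - l = (k - l) + 1 by omega,
              key d (k - l) (by omega), mul_zero]
  rw [step2]
  rw [show (-1 : ℝ) ^ k * (2 : ℝ) ^ (-((d+1 : ℕ) : ℤ) - (k : ℤ)) * ((2 : ℝ) ^ k * (n.choose k))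
      = (-1 : ℝ) ^ k * ((2 : ℝ) ^ (-((d+1 : ℕ) : ℤ) - (k : ℤ)) * (2 : ℝ) ^ (k : ℤ)) * (n.choose k)
      from by rw [zpow_natCast]; ring,
    ← zpow_add₀ (two_ne_zero (α := ℝ)), show -((d+1 : ℕ) : ℤ) - (k : ℤ) + (k : ℤ) = -((d+1 : ℕ) : ℤ) by ring]

theorem betaCoef_recurrence (n j : ℕ) (hnj : n < 2 * j) :
    betaCoef n j j = (2 : ℝ) ^ (-(j : ℤ)) ∧
    ∀ k : ℕ, 1 ≤ k → k ≤ j - 1 →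
      betaCoef n j (j - k) =
        (-1 : ℝ) ^ k * (2 : ℝ) ^ (-(j : ℤ)) * (n.choose k) -
          ∑ i ∈ Finset.range k,
            (-2 : ℝ) ^ ((i : ℤ) - (k : ℤ)) * (j.choose (k - i)) * betaCoef n j (j - i) := by
  constructor
  · unfold betaCoef
    rw [Nat.sub_self]
    simp
  · intro k hk1 hk
    have hm := master n j k hk1 (by omega)
    rw [Finset.sum_range_succ] at hm
    have hlast : (-2 : ℝ) ^ ((k : ℤ) - (k : ℤ)) * (j.choose (k - k)) * betaCoef n j (j - k)
        = betaCoef n j (j - k) := by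
      simp
    rw [hlast] at hm
    linarith
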